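/- Fix δ > 0, b ≥ b₀(δ) (so that exp(2·1.01·(ωb)²/λ) ≤ 1.01), ω = (1+δ)ln b/b, λ = ω(1+ω)^b. Under the broadcast measure ν_h on the complete b-ary tree of height h with N = (b^{h+1}−1)/(b−1) vertices, the average sensitivity of the bottom-up reconstruction function A satisfies S̄_A = E_{σ∼ν_h}[S_A(σ)·1{A(σ)=1}] = O((1.01·ω/λ^{1/2})^h). In particular S̄_A = O(N^{−d}) where d = 1 + ln(λ/(1.01·ωb)²)/(2 ln b). -/

import Mathlib

open Finset

/-- Vertices of the complete `b`-ary tree of height `h`: a vertex at depth `k` is a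
path of `k` child-indices from the root. -/
def Vtx (b h : ℕ) : Type := Σ k : Fin (h + 1), (Fin (k : ℕ) → Fin b)

noncomputable instance (b h : ℕ) : Fintype (Vtx b h) := by unfold Vtx; infer_instance
instance (b h : ℕ) : DecidableEq (Vtx b h) := by unfold Vtx; infer_instance

/-- Depth of a vertex. -/
def Vtx.depth {b h : ℕ} (v : Vtx b h) : ℕ := (v.1 : ℕ)

/-- The root. -/
def treeRoot (b h : ℕ) : Vtx b h :=
  ⟨⟨0, Nat.succ_pos h⟩, fun i => i.elim0⟩

/-- Parent of a vertex (the root is its own parent). -/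
def Vtx.parent {b h : ℕ} (v : Vtx b h) : Vtx b h :=
  ⟨⟨(v.1 : ℕ) - 1, lt_of_le_of_lt (Nat.sub_le _ _) v.1.isLt⟩,
    fun i => v.2 ⟨(i : ℕ), lt_of_lt_of_le i.isLt (Nat.sub_le _ _)⟩⟩

/-- The `j`-th child of a non-leaf vertex. -/
def Vtx.child {b h : ℕ} (v : Vtx b h) (hlt : (v.1 : ℕ) < h) (j : Fin b) : Vtx b h :=
  ⟨⟨(v.1 : ℕ) + 1, by omega⟩,
    fun i => if hi : (i : ℕ) < (v.1 : ℕ) then v.2 ⟨(i : ℕ), hi⟩ else j⟩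

/-- The vertex at depth `d` on the all-`0` path from the root to a fixed leaf. -/
def pathVtx (b h : ℕ) (hb : 0 < b) (d : Fin (h + 1)) : Vtx b h :=
  ⟨d, fun _ => ⟨0, hb⟩⟩

/-- The bottom-up reconstruction rule: a leaf is labeled by its spin; an internal vertex
is labeled occupied iff all its children are labeled unoccupied. -/
def Rfun {b h : ℕ} (σ : Vtx b h → Bool) (v : Vtx b h) : Bool :=
  if hk : (v.1 : ℕ) = h then σ v
  else decide (∀ j : Fin b,
    Rfun σ (v.child (lt_of_le_of_ne (Nat.lt_succ_iff.mp v.1.isLt) hk) j) = false)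
termination_by h - (v.1 : ℕ)
decreasing_by
  all_goals
    have hv := v.1.isLt
    show h - ((v.1 : ℕ) + 1) < h - (v.1 : ℕ)
    omega

/-- The broadcast measure `ν_h` on the complete `b`-ary tree. -/
noncomputable def bcast (b h : ℕ) (ω : ℝ) (σ : Vtx b h → Bool) : ℝ :=
  ∏ v : Vtx b h,
    if (v.1 : ℕ) = 0 then (if σ v then ω / (1 + ω) else 1 - ω / (1 + ω))
    else if σ v.parent then (if σ v then 0 else 1)
    else (if σ v then ω / (1 + ω) else 1 - ω / (1 + ω))

/-- `N = (b^{h+1}−1)/(b−1)`, the number of vertices of the tree. -/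
noncomputable def Nvert (b h : ℕ) : ℝ := ((b : ℝ) ^ (h + 1) - 1) / ((b : ℝ) - 1)

/-- The average sensitivity `S̄_A = E_{σ∼ν_h}[S_A(σ)·1{A(σ)=1}]` of the bottom-up
reconstruction rule `A = R_σ(root)`, where
`S_A(σ) = (1/N)·#{leaves v : A(σ^v) ≠ A(σ)}`. -/
noncomputable def SbarA (b h : ℕ) (ω : ℝ) : ℝ :=
  ∑ σ : Vtx b h → Bool,
    bcast b h ω σ *
      ((1 / Nvert b h) *
        ((Finset.univ.filter (fun v : Vtx b h => (v.1 : ℕ) = h ∧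
          Rfun (Function.update σ v (!σ v)) (treeRoot b h) ≠
            Rfun σ (treeRoot b h))).card : ℝ)) *
      (if Rfun σ (treeRoot b h) = true then 1 else 0)

namespace Aux18

variable {b h : ℕ}

lemma Vtx.ext' {v w : Vtx b h} (h1 : (v.1 : ℕ) = (w.1 : ℕ))
    (h2 : ∀ i : ℕ, (hi : i < (v.1 : ℕ)) → v.2 ⟨i, hi⟩ = w.2 ⟨i, h1 ▸ hi⟩) : v = w := by
  obtain ⟨a, f⟩ := v
  obtain ⟨a', f'⟩ := w
  obtain rfl : a = a' := Fin.ext h1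
  have : f = f' := funext fun i => by simpa using h2 i i.isLt
  rw [this]

lemma eq_root_of_depth_zero {v : Vtx b h} (hv : (v.1 : ℕ) = 0) : v = treeRoot b h := by
  apply Vtx.ext'
  case h1 => simpa [treeRoot] using hv
  case h2 => intro i hi; omega

def emb (b h : ℕ) (j : Fin b) (w : Vtx b h) : Vtx b (h + 1) :=
  ⟨⟨(w.1 : ℕ) + 1, by have := w.1.isLt; omega⟩, Fin.cons j w.2⟩

@[simp] lemma emb_depth (j : Fin b) (w : Vtx b h) : ((emb b h j w).1 : ℕ) = (w.1 : ℕ) + 1 := rfl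

def unemb (b h : ℕ) (v : Vtx b (h + 1)) : Unit ⊕ (Fin b × Vtx b h) :=
  if hk : (v.1 : ℕ) = 0 then Sum.inl () else
    Sum.inr (v.2 ⟨0, by omega⟩,
      ⟨⟨(v.1 : ℕ) - 1, by have := v.1.isLt; omega⟩,
        fun i => v.2 ⟨(i : ℕ) + 1, by have := i.isLt; simp at this ⊢; omega⟩⟩)

@[simp] lemma unemb_emb (j : Fin b) (w : Vtx b h) : unemb b h (emb b h j w) = Sum.inr (j, w) := by
  rw [unemb, dif_neg (by simp)]
  refine congrArg Sum.inr (congrArg₂ Prod.mk ?_ ?_)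
  · exact @Fin.cons_zero _ (fun _ => Fin b) j w.2
  · refine Vtx.ext' ?d ?s
    case d => simp
    case s =>
      intro i hi
      exact @Fin.cons_succ _ (fun _ => Fin b) j w.2 ⟨i, by simpa using hi⟩

lemma emb_injective (j : Fin b) : Function.Injective (emb b h j) := by
  intro v w hvw
  have := congrArg (unemb b h) hvw
  simpa using this

lemma emb_ne (j k : Fin b) (hjk : j ≠ k) (v w : Vtx b h) : emb b h j v ≠ emb b h k w := by
  intro hvw
  have := congrArg (unemb b h) hvw
  simp at this
  exact hjk this.1

lemma root_ne_emb (j : Fin b) (w : Vtx b h) : treeRoot b (h+1) ≠ emb b h j w := by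
  intro hc
  have := congrArg (fun x : Vtx b (h+1) => (x.1 : ℕ)) hc
  simp [treeRoot, emb] at this

lemma unemb_root : unemb b h (treeRoot b (h+1)) = Sum.inl () := by
  rw [unemb]
  exact dif_pos rfl

def eV (b h : ℕ) : Unit ⊕ (Fin b × Vtx b h) ≃ Vtx b (h + 1) where
  toFun x := x.elim (fun _ => treeRoot b (h+1)) (fun p => emb b h p.1 p.2)
  invFun := unemb b h
  left_inv x := by
    rcases x with _ | ⟨j, w⟩
    · simp [unemb_root]
    · simp
  right_inv v := by
    by_cases hv : (v.1 : ℕ) = 0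
    · rw [eq_root_of_depth_zero hv, unemb_root]; rfl
    · rw [unemb, dif_neg hv]
      simp only [Sum.elim_inr]
      refine Vtx.ext' ?d ?s
      case d => simp [emb]; omega
      case s =>
        intro i hi
        rcases i with _ | i
        · rfl
        · rfl

end Aux18
namespace Aux18

variable {b h : ℕ}

@[simp] lemma child_depth (v : Vtx b h) (hlt : (v.1 : ℕ) < h) (j' : Fin b) :
    ((v.child hlt j').1 : ℕ) = (v.1 : ℕ) + 1 := rfl

lemma child_snd_lt (v : Vtx b h) (hlt : (v.1 : ℕ) < h) (j' : Fin b) (i : ℕ)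
    (hi : i < (v.1 : ℕ)) (hi2 : i < ((v.child hlt j').1 : ℕ)) :
    (v.child hlt j').2 ⟨i, hi2⟩ = v.2 ⟨i, hi⟩ := dif_pos hi

lemma child_snd_last (v : Vtx b h) (hlt : (v.1 : ℕ) < h) (j' : Fin b) (i : ℕ)
    (hi : ¬ i < (v.1 : ℕ)) (hi2 : i < ((v.child hlt j').1 : ℕ)) :
    (v.child hlt j').2 ⟨i, hi2⟩ = j' := dif_neg hi

lemma emb_snd_zero (j : Fin b) (w : Vtx b h) (h0 : 0 < ((emb b h j w).1 : ℕ)) :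
    (emb b h j w).2 ⟨0, h0⟩ = j := rfl

lemma emb_snd_succ (j : Fin b) (w : Vtx b h) (i : ℕ) (hi : i < (w.1 : ℕ))
    (hi2 : i + 1 < ((emb b h j w).1 : ℕ)) :
    (emb b h j w).2 ⟨i + 1, hi2⟩ = w.2 ⟨i, hi⟩ := rfl

lemma child_emb (j j' : Fin b) (w : Vtx b h) (hw : (w.1 : ℕ) < h)
    (hw' : ((emb b h j w).1 : ℕ) < h + 1) :
    (emb b h j w).child hw' j' = emb b h j (w.child hw j') := by
  refine Vtx.ext' ?d ?s
  case d => rfl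
  case s =>
    intro i hi
    rcases i with _ | i
    · rw [child_snd_lt _ hw' j' 0 (by simp), emb_snd_zero]; rfl
    · by_cases hc : i < (w.1 : ℕ)
      · rw [child_snd_lt _ hw' j' (i+1) (by simp; omega),
          emb_snd_succ j w i hc,
          emb_snd_succ j (w.child hw j') i (by simp; omega),
          child_snd_lt _ hw j' i hc]
      · rw [child_snd_last _ hw' j' (i+1) (by simp; omega),
          emb_snd_succ j (w.child hw j') i
            (by have := hi; simp only [child_depth, emb_depth] at this; simp; omega),
          child_snd_last _ hw j' i hc]

lemma root_child (j : Fin b) (hr : ((treeRoot b (h+1)).1 : ℕ) < h + 1) :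
    (treeRoot b (h+1)).child hr j = emb b h j (treeRoot b h) := by
  refine Vtx.ext' ?d ?s
  case d => rfl
  case s =>
    intro i hi
    rcases i with _ | i
    · rw [child_snd_last _ hr j 0 (by simp [treeRoot]), emb_snd_zero]
    · exact absurd hi (by simp [treeRoot, Vtx.child])

lemma Rfun_leaf (σ : Vtx b h → Bool) (v : Vtx b h) (hv : (v.1 : ℕ) = h) : Rfun σ v = σ v := by
  rw [Rfun]; exact dif_pos hv

lemma Rfun_node (σ : Vtx b h → Bool) (v : Vtx b h) (hv : (v.1 : ℕ) ≠ h) :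
    Rfun σ v = decide (∀ j : Fin b,
      Rfun σ (v.child (lt_of_le_of_ne (Nat.lt_succ_iff.mp v.1.isLt) hv) j) = false) := by
  rw [Rfun]; exact dif_neg hv

lemma Rfun_emb (σ : Vtx b (h+1) → Bool) (j : Fin b) (w : Vtx b h) :
    Rfun σ (emb b h j w) = Rfun (fun u => σ (emb b h j u)) w := by
  generalize hn : h - (w.1 : ℕ) = n
  induction n generalizing w with
  | zero =>
    have hw : (w.1 : ℕ) = h := by have := w.1.isLt; omega
    rw [Rfun_leaf σ _ (by simp [hw]), Rfun_leaf _ _ hw]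
  | succ n ih =>
    have hw : (w.1 : ℕ) < h := by omega
    rw [Rfun_node σ _ (by simp; omega), Rfun_node _ _ (by omega)]
    rw [decide_eq_decide]
    refine forall_congr' fun j' => ?_
    rw [child_emb j j' w hw, ih (w.child hw j') (by simp; omega)]

lemma Rfun_root_succ (σ : Vtx b (h+1) → Bool) :
    Rfun σ (treeRoot b (h+1)) =
      decide (∀ j : Fin b, Rfun (fun u => σ (emb b h j u)) (treeRoot b h) = false) := by
  rw [Rfun_node σ _ (by simp [treeRoot])]
  rw [decide_eq_decide]
  refine forall_congr' fun j => ?_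
  rw [root_child j, Rfun_emb]

lemma Rfun_root_zero (σ : Vtx b 0 → Bool) : Rfun σ (treeRoot b 0) = σ (treeRoot b 0) :=
  Rfun_leaf σ _ rfl

end Aux18
namespace Aux18

variable {b h : ℕ}

lemma parent_snd (v : Vtx b h) (i : ℕ) (hi : i < ((v.parent).1 : ℕ)) (hi' : i < (v.1 : ℕ)) :
    v.parent.2 ⟨i, hi⟩ = v.2 ⟨i, hi'⟩ := rfl

@[simp] lemma parent_depth (v : Vtx b h) : ((v.parent).1 : ℕ) = (v.1 : ℕ) - 1 := rfl

lemma parent_emb (j : Fin b) (w : Vtx b h) (hw : (w.1 : ℕ) ≠ 0) :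
    (emb b h j w).parent = emb b h j w.parent := by
  refine Vtx.ext' ?d ?s
  case d => simp; omega
  case s =>
    intro i hi
    rcases i with _ | i
    · rfl
    · rfl

lemma parent_emb_root (j : Fin b) (w : Vtx b h) (hw : (w.1 : ℕ) = 0) :
    (emb b h j w).parent = treeRoot b (h+1) :=
  eq_root_of_depth_zero (by simp [hw])

instance : Unique (Vtx b 0) :=
  ⟨⟨treeRoot b 0⟩, fun v => eq_root_of_depth_zero (by have := v.1.isLt; omega)⟩

noncomputable def fac (ω : ℝ) (s t : Bool) : ℝ :=
  if s then (if t then 0 else 1) else (if t then ω / (1 + ω) else 1 - ω / (1 + ω))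

lemma fac_nonneg {ω : ℝ} (hω : 0 ≤ ω) (s t : Bool) : 0 ≤ fac ω s t := by
  have h1 : (0:ℝ) < 1 + ω := by linarith
  have h2 : ω / (1 + ω) ≤ 1 := by
    rw [div_le_one h1]; linarith
  have h3 : 0 ≤ ω / (1 + ω) := div_nonneg hω h1.le
  cases s <;> cases t <;> simp [fac] <;> linarith

lemma fac_sum (ω : ℝ) (s : Bool) : fac ω s true + fac ω s false = 1 := by
  cases s <;> simp [fac]

noncomputable def bcastP (b h : ℕ) (ω : ℝ) (s : Bool) (σ : Vtx b h → Bool) : ℝ :=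
  ∏ v : Vtx b h, fac ω (if (v.1 : ℕ) = 0 then s else σ v.parent) (σ v)

lemma bcastP_nonneg {ω : ℝ} (hω : 0 ≤ ω) (s : Bool) (σ : Vtx b h → Bool) :
    0 ≤ bcastP b h ω s σ :=
  Finset.prod_nonneg fun v _ => fac_nonneg hω _ _

lemma bcast_eq (ω : ℝ) (σ : Vtx b h → Bool) : bcast b h ω σ = bcastP b h ω false σ := by
  unfold bcast bcastP
  refine Finset.prod_congr rfl fun v _ => ?_
  by_cases h0 : (v.1 : ℕ) = 0 <;> simp [h0, fac]

def glue (b h : ℕ) (p : Bool × (Fin b → Vtx b h → Bool)) (v : Vtx b (h+1)) : Bool :=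
  (unemb b h v).elim (fun _ => p.1) fun q => p.2 q.1 q.2

@[simp] lemma glue_root (p : Bool × (Fin b → Vtx b h → Bool)) :
    glue b h p (treeRoot b (h+1)) = p.1 := by
  unfold glue; rw [unemb_root]; rfl

@[simp] lemma glue_emb (p : Bool × (Fin b → Vtx b h → Bool)) (j : Fin b) (w : Vtx b h) :
    glue b h p (emb b h j w) = p.2 j w := by
  unfold glue; rw [unemb_emb]; rfl

def eC (b h : ℕ) : (Bool × (Fin b → Vtx b h → Bool)) ≃ (Vtx b (h+1) → Bool) where
  toFun := glue b h
  invFun σ := (σ (treeRoot b (h+1)), fun j w => σ (emb b h j w))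
  left_inv p := by
    refine Prod.ext ?_ ?_
    · simp
    · funext j w; simp
  right_inv σ := by
    funext v
    rcases (eV b h).surjective v with ⟨x, rfl⟩
    rcases x with _ | ⟨j, w⟩
    · rw [show (eV b h) (Sum.inl ()) = treeRoot b (h+1) from rfl]; simp
    · rw [show (eV b h) (Sum.inr (j, w)) = emb b h j w from rfl]; simp

lemma sum_config (F : (Vtx b (h+1) → Bool) → ℝ) :
    ∑ σ : Vtx b (h+1) → Bool, F σ
      = ∑ s : Bool, ∑ τ : Fin b → Vtx b h → Bool, F (glue b h (s, τ)) := by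
  rw [← Equiv.sum_comp (eC b h) F, Fintype.sum_prod_type]
  rfl

lemma prod_vtx (G : Vtx b (h+1) → ℝ) :
    ∏ v : Vtx b (h+1), G v
      = G (treeRoot b (h+1)) * ∏ j : Fin b, ∏ w : Vtx b h, G (emb b h j w) := by
  rw [← Equiv.prod_comp (eV b h) G, Fintype.prod_sum_type, Fintype.prod_prod_type]
  simp [eV]

lemma bcastP_glue (ω : ℝ) (s s' : Bool) (τ : Fin b → Vtx b h → Bool) :
    bcastP b (h+1) ω s (glue b h (s', τ))
      = fac ω s s' * ∏ j : Fin b, bcastP b h ω s' (τ j) := by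
  unfold bcastP
  rw [prod_vtx]
  have h2 : ∀ j : Fin b,
      (∏ w : Vtx b h, fac ω
        (if ((emb b h j w).1 : ℕ) = 0 then s else glue b h (s', τ) ((emb b h j w).parent))
        (glue b h (s', τ) (emb b h j w)))
      = ∏ w : Vtx b h, fac ω (if (w.1 : ℕ) = 0 then s' else τ j w.parent) (τ j w) := by
    intro j
    refine Finset.prod_congr rfl fun w _ => ?_
    rw [glue_emb]
    by_cases hw : (w.1 : ℕ) = 0
    · rw [if_neg (by simp), parent_emb_root j w hw, glue_root, if_pos hw]
    · rw [if_neg (by simp), parent_emb j w hw, glue_emb, if_neg hw]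
  rw [Finset.prod_congr rfl (fun j _ => h2 j)]
  have h3 : (if ((treeRoot b (h+1)).1 : ℕ) = 0 then s else glue b h (s', τ) ((treeRoot b (h+1)).parent)) = s := by
    simp [treeRoot]
  rw [h3, glue_root]

end Aux18
namespace Aux18

variable {b h : ℕ}

lemma sum_tau_prod {K : Type*} [Fintype K] [DecidableEq K] (F : Fin b → K → ℝ) :
    ∑ τ : Fin b → K, ∏ j, F j (τ j) = ∏ j, ∑ y : K, F j y := by
  classical
  rw [Finset.prod_univ_sum]
  rw [Fintype.piFinset_univ]

noncomputable def massA (b h : ℕ) (ω : ℝ) (s : Bool) : ℝ :=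
  ∑ σ : Vtx b h → Bool, bcastP b h ω s σ

lemma sum_config_zero (g : Bool → ℝ) :
    ∑ σ : Vtx b 0 → Bool, g (σ (treeRoot b 0)) = g true + g false := by
  rw [show (∑ σ : Vtx b 0 → Bool, g (σ (treeRoot b 0))) = ∑ t : Bool, g t from
    Equiv.sum_comp (Equiv.funUnique (Vtx b 0) Bool) g, Fintype.sum_bool]

lemma bcastP_zero (ω : ℝ) (s : Bool) (σ : Vtx b 0 → Bool) :
    bcastP b 0 ω s σ = fac ω s (σ (treeRoot b 0)) := by
  unfold bcastP
  rw [Fintype.prod_unique (fun v : Vtx b 0 =>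
    fac ω (if (v.1 : ℕ) = 0 then s else σ v.parent) (σ v))]
  rfl

lemma massA_zero (ω : ℝ) (s : Bool) : massA b 0 ω s = 1 := by
  unfold massA
  simp only [bcastP_zero]
  rw [sum_config_zero (fun t => fac ω s t), fac_sum]

lemma massA_succ (ω : ℝ) (s : Bool) :
    massA b (h+1) ω s = ∑ s' : Bool, fac ω s s' * (massA b h ω s') ^ b := by
  unfold massA
  rw [sum_config]
  refine Fintype.sum_congr _ _ fun s' => ?_
  simp only [bcastP_glue]
  rw [← Finset.mul_sum]
  congr 1
  rw [sum_tau_prod (fun j σ' => bcastP b h ω s' σ')]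
  rw [Finset.prod_const, Finset.card_univ, Fintype.card_fin]

lemma massA_one (ω : ℝ) : ∀ (h : ℕ) (s : Bool), massA b h ω s = 1 := by
  intro h
  induction h with
  | zero => exact fun s => massA_zero ω s
  | succ h ih =>
    intro s
    rw [massA_succ, Fintype.sum_bool, ih true, ih false]
    simp [fac_sum]

noncomputable def P0 (b h : ℕ) (ω : ℝ) (s : Bool) : ℝ :=
  ∑ σ : Vtx b h → Bool, bcastP b h ω s σ * (if Rfun σ (treeRoot b h) = false then 1 else 0)

noncomputable def P1 (b h : ℕ) (ω : ℝ) (s : Bool) : ℝ :=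
  ∑ σ : Vtx b h → Bool, bcastP b h ω s σ * (if Rfun σ (treeRoot b h) = true then 1 else 0)

lemma P0_add_P1 (ω : ℝ) (s : Bool) : P0 b h ω s + P1 b h ω s = 1 := by
  unfold P0 P1
  rw [← Finset.sum_add_distrib]
  have : ∀ σ : Vtx b h → Bool,
      bcastP b h ω s σ * (if Rfun σ (treeRoot b h) = false then 1 else 0)
        + bcastP b h ω s σ * (if Rfun σ (treeRoot b h) = true then 1 else 0)
      = bcastP b h ω s σ := by
    intro σ
    cases hR : Rfun σ (treeRoot b h) <;> simp [hR]
  rw [Fintype.sum_congr _ _ this]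
  exact massA_one ω h s

lemma P0_nonneg {ω : ℝ} (hω : 0 ≤ ω) (s : Bool) : 0 ≤ P0 b h ω s :=
  Finset.sum_nonneg fun σ _ => mul_nonneg (bcastP_nonneg hω s σ) (by positivity)

lemma P1_nonneg {ω : ℝ} (hω : 0 ≤ ω) (s : Bool) : 0 ≤ P1 b h ω s :=
  Finset.sum_nonneg fun σ _ => mul_nonneg (bcastP_nonneg hω s σ) (by positivity)

lemma P0_le_one {ω : ℝ} (hω : 0 ≤ ω) (s : Bool) : P0 b h ω s ≤ 1 := by
  nlinarith [P0_add_P1 (b := b) (h := h) ω s, P1_nonneg (b := b) (h := h) hω s]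

lemma P0_zero (ω : ℝ) (s : Bool) : P0 b 0 ω s = fac ω s false := by
  unfold P0
  simp only [bcastP_zero, Rfun_root_zero]
  rw [sum_config_zero (fun t => fac ω s t * (if t = false then 1 else 0))]
  simp

lemma glue_comp_emb (p : Bool × (Fin b → Vtx b h → Bool)) (j : Fin b) :
    (fun u => glue b h p (emb b h j u)) = p.2 j := by
  funext u; simp

lemma P1_succ (ω : ℝ) (s : Bool) :
    P1 b (h+1) ω s = ∑ s' : Bool, fac ω s s' * (P0 b h ω s') ^ b := by
  unfold P1
  rw [sum_config]
  refine Fintype.sum_congr _ _ fun s' => ?_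
  have key : ∀ τ : Fin b → Vtx b h → Bool,
      bcastP b (h+1) ω s (glue b h (s', τ))
        * (if Rfun (glue b h (s', τ)) (treeRoot b (h+1)) = true then (1:ℝ) else 0)
      = fac ω s s' * ∏ j : Fin b,
          (bcastP b h ω s' (τ j) * (if Rfun (τ j) (treeRoot b h) = false then 1 else 0)) := by
    intro τ
    rw [bcastP_glue, Rfun_root_succ, Finset.prod_mul_distrib]
    have hind : (if (decide (∀ j : Fin b,
          Rfun (fun u => glue b h (s', τ) (emb b h j u)) (treeRoot b h) = false)) = true
          then (1:ℝ) else 0)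
        = ∏ j : Fin b, (if Rfun (τ j) (treeRoot b h) = false then (1:ℝ) else 0) := by
      simp only [glue_comp_emb]
      by_cases hall : ∀ j : Fin b, Rfun (τ j) (treeRoot b h) = false
      · rw [if_pos (by simpa using hall)]
        rw [Finset.prod_congr rfl (fun j _ => if_pos (hall j))]
        simp
      · rw [if_neg (by simpa using hall)]
        push_neg at hall
        obtain ⟨j0, hj0⟩ := hall
        refine (Finset.prod_eq_zero (Finset.mem_univ j0) ?_).symm
        rw [if_neg hj0]
    rw [hind]
    ring
  rw [Fintype.sum_congr _ _ key]
  rw [← Finset.mul_sum]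
  congr 1
  rw [sum_tau_prod (fun _ σ' => bcastP b h ω s' σ' *
    (if Rfun σ' (treeRoot b h) = false then (1:ℝ) else 0))]
  rw [Finset.prod_const, Finset.card_univ, Fintype.card_fin]
  rfl

lemma P0_succ (ω : ℝ) (s : Bool) :
    P0 b (h+1) ω s = ∑ s' : Bool, fac ω s s' * (1 - (P0 b h ω s') ^ b) := by
  have h1 := P0_add_P1 (b := b) (h := h+1) ω s
  have h2 := P1_succ (b := b) (h := h) ω s
  have h3 : ∑ s' : Bool, fac ω s s' * (1 - (P0 b h ω s') ^ b)
      = 1 - ∑ s' : Bool, fac ω s s' * (P0 b h ω s') ^ b := by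
    rw [Fintype.sum_bool, Fintype.sum_bool]
    have := fac_sum ω s
    ring_nf
    nlinarith [fac_sum ω s]
  linarith

end Aux18
namespace Aux18

variable {b h : ℕ}

noncomputable def zeroI (b h : ℕ) (σ' : Vtx b h → Bool) : ℝ :=
  if Rfun σ' (treeRoot b h) = false then 1 else 0

noncomputable def flipI (b h : ℕ) (w : Vtx b h) (σ' : Vtx b h → Bool) : ℝ :=
  if Rfun (Function.update σ' w (!σ' w)) (treeRoot b h) ≠ Rfun σ' (treeRoot b h)
    then 1 else 0

lemma zeroI_one {σ' : Vtx b h → Bool} (hz : Rfun σ' (treeRoot b h) = false) :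
    zeroI b h σ' = 1 := if_pos hz

lemma zeroI_zero {σ' : Vtx b h → Bool} (hz : ¬ Rfun σ' (treeRoot b h) = false) :
    zeroI b h σ' = 0 := if_neg hz

lemma flipI_one {w : Vtx b h} {σ' : Vtx b h → Bool}
    (hz : Rfun (Function.update σ' w (!σ' w)) (treeRoot b h) ≠ Rfun σ' (treeRoot b h)) :
    flipI b h w σ' = 1 := if_pos hz

lemma flipI_zero {w : Vtx b h} {σ' : Vtx b h → Bool}
    (hz : ¬ Rfun (Function.update σ' w (!σ' w)) (treeRoot b h) ≠ Rfun σ' (treeRoot b h)) :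
    flipI b h w σ' = 0 := if_neg hz

noncomputable def Piv (b h : ℕ) (ω : ℝ) (s : Bool) (v : Vtx b h) : ℝ :=
  ∑ σ : Vtx b h → Bool, bcastP b h ω s σ * flipI b h v σ

lemma P0_eq (ω : ℝ) (s : Bool) :
    P0 b h ω s = ∑ σ : Vtx b h → Bool, bcastP b h ω s σ * zeroI b h σ := rfl

lemma Piv_nonneg {ω : ℝ} (hω : 0 ≤ ω) (s : Bool) (v : Vtx b h) : 0 ≤ Piv b h ω s v :=
  Finset.sum_nonneg fun σ _ => mul_nonneg (bcastP_nonneg hω s σ)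
    (by unfold flipI; positivity)

lemma Piv_zero (ω : ℝ) (s : Bool) : Piv b 0 ω s (treeRoot b 0) = 1 := by
  unfold Piv
  have hc : ∀ σ : Vtx b 0 → Bool,
      bcastP b 0 ω s σ * flipI b 0 (treeRoot b 0) σ = bcastP b 0 ω s σ := by
    intro σ
    unfold flipI
    rw [Rfun_root_zero, Rfun_root_zero, Function.update_self]
    cases σ (treeRoot b 0) <;> simp
  rw [Fintype.sum_congr _ _ hc]
  exact massA_one ω 0 s

lemma flip_decide (A B : Fin b → Bool) (j : Fin b) (hAB : ∀ k, k ≠ j → A k = B k) :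
    (decide (∀ k, B k = false) ≠ decide (∀ k, A k = false))
      ↔ (B j ≠ A j ∧ ∀ k, k ≠ j → A k = false) := by
  constructor
  · intro hne
    have hall : ∀ k, k ≠ j → A k = false := by
      intro k hkj
      by_contra hk
      have hA : A k = true := by
        cases hAk : A k
        · exact absurd hAk hk
        · rfl
      apply hne
      have h1 : ¬ (∀ m, A m = false) := fun hf => by simp [hf k] at hA
      have h2 : ¬ (∀ m, B m = false) := fun hf => by
        have := hf k
        rw [← hAB k hkj] at this
        simp [this] at hA
      simp [h1, h2]
    refine ⟨?_, hall⟩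
    intro hBA
    apply hne
    rw [decide_eq_decide]
    refine forall_congr' fun m => ?_
    by_cases hmj : m = j
    · subst hmj; rw [hBA]
    · rw [hAB m hmj]
  · rintro ⟨hBA, hall⟩ heq
    rw [decide_eq_decide] at heq
    have hA : (∀ m, A m = false) ↔ (A j = false) := by
      constructor
      · exact fun hf => hf j
      · intro hj m
        by_cases hmj : m = j
        · subst hmj; exact hj
        · exact hall m hmj
    have hB : (∀ m, B m = false) ↔ (B j = false) := by
      constructor
      · exact fun hf => hf j
      · intro hj m
        by_cases hmj : m = j
        · subst hmj; exact hj
        · rw [← hAB m hmj]; exact hall m hmj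
    have hfin : B j = false ↔ A j = false := by rw [← hA, ← hB, heq]
    cases hAj : A j <;> cases hBj : B j <;> simp_all

lemma glue_comp_emb' (p : Bool × (Fin b → Vtx b h → Bool)) (j : Fin b) :
    (glue b h p) ∘ emb b h j = p.2 j := by
  funext u; simp [Function.comp]

lemma Piv_succ (ω : ℝ) (s : Bool) (j : Fin b) (w : Vtx b h) :
    Piv b (h+1) ω s (emb b h j w)
      = ∑ s' : Bool, fac ω s s' * (Piv b h ω s' w * (P0 b h ω s') ^ (b - 1)) := by
  unfold Piv
  rw [sum_config]
  refine Fintype.sum_congr _ _ fun s' => ?_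
  have key : ∀ τ : Fin b → Vtx b h → Bool,
      bcastP b (h+1) ω s (glue b h (s', τ)) * flipI b (h+1) (emb b h j w) (glue b h (s', τ))
      = fac ω s s' * ∏ k : Fin b,
          (bcastP b h ω s' (τ k) * (if k = j then flipI b h w (τ k) else zeroI b h (τ k))) := by
    intro τ
    set upd := Function.update (glue b h (s', τ)) (emb b h j w)
      (!(glue b h (s', τ) (emb b h j w))) with hupd
    have comp_j : (fun u => upd (emb b h j u)) = Function.update (τ j) w (!(τ j w)) := by
      have hstep := Function.update_comp_eq_of_injective (glue b h (s', τ)) (emb_injective j)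
        w (!(glue b h (s', τ) (emb b h j w)))
      calc (fun u => upd (emb b h j u))
          = Function.update (glue b h (s', τ)) (emb b h j w)
              (!(glue b h (s', τ) (emb b h j w))) ∘ emb b h j := rfl
        _ = Function.update ((glue b h (s', τ)) ∘ emb b h j) w
              (!(glue b h (s', τ) (emb b h j w))) := hstep
        _ = Function.update (τ j) w (!(τ j w)) := by
              rw [glue_emb, glue_comp_emb']
    have comp_k : ∀ k, k ≠ j → (fun u => upd (emb b h k u)) = τ k := by
      intro k hkj
      have hstep := Function.update_comp_eq_of_forall_ne (f := emb b h k)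
        (glue b h (s', τ)) (!(glue b h (s', τ) (emb b h j w)))
        (fun u => emb_ne k j hkj u w)
      calc (fun u => upd (emb b h k u))
          = Function.update (glue b h (s', τ)) (emb b h j w)
              (!(glue b h (s', τ) (emb b h j w))) ∘ emb b h k := rfl
        _ = (glue b h (s', τ)) ∘ emb b h k := hstep
        _ = τ k := glue_comp_emb' (s', τ) k
    have hRu : Rfun upd (treeRoot b (h+1))
        = decide (∀ k : Fin b, Rfun (fun u => upd (emb b h k u)) (treeRoot b h) = false) :=
      Rfun_root_succ upd
    have hRg : Rfun (glue b h (s', τ)) (treeRoot b (h+1))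
        = decide (∀ k : Fin b, Rfun (τ k) (treeRoot b h) = false) := by
      rw [Rfun_root_succ]
      rw [decide_eq_decide]
      refine forall_congr' fun k => ?_
      rw [glue_comp_emb (s', τ) k]
    have h0 := flip_decide (fun k => Rfun (τ k) (treeRoot b h))
      (fun k => Rfun (fun u => upd (emb b h k u)) (treeRoot b h)) j
      (fun k hkj => by
        show Rfun (τ k) (treeRoot b h) = Rfun (fun u => upd (emb b h k u)) (treeRoot b h)
        rw [comp_k k hkj])
    beta_reduce at h0
    rw [comp_j] at h0
    have hind : flipI b (h+1) (emb b h j w) (glue b h (s', τ))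
        = flipI b h w (τ j) * ∏ k ∈ Finset.univ.erase j, zeroI b h (τ k) := by
      unfold flipI
      rw [hRu, hRg]
      by_cases h1 : Rfun (Function.update (τ j) w (!(τ j w))) (treeRoot b h)
          ≠ Rfun (τ j) (treeRoot b h)
      · by_cases h2 : ∀ k, k ≠ j → Rfun (τ k) (treeRoot b h) = false
        · rw [if_pos (h0.mpr ⟨h1, h2⟩), if_pos h1]
          rw [Finset.prod_congr rfl (fun k hk =>
            zeroI_one (h2 k (Finset.mem_erase.mp hk).1))]
          simp
        · rw [if_neg (fun hc => h2 (h0.mp hc).2)]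
          push_neg at h2
          obtain ⟨k0, hk0j, hk0⟩ := h2
          rw [Finset.prod_eq_zero (Finset.mem_erase.mpr ⟨hk0j, Finset.mem_univ k0⟩)
            (zeroI_zero hk0)]
          ring
      · rw [if_neg (fun hc => h1 (h0.mp hc).1), if_neg h1]
        ring
    rw [bcastP_glue, hind, Finset.prod_mul_distrib]
    rw [← Finset.mul_prod_erase Finset.univ
      (fun k => if k = j then flipI b h w (τ k) else zeroI b h (τ k)) (Finset.mem_univ j)]
    rw [if_pos rfl]
    rw [Finset.prod_congr rfl (fun k hk => if_neg (Finset.mem_erase.mp hk).1)]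
    ring
  rw [Fintype.sum_congr _ _ key]
  rw [← Finset.mul_sum]
  congr 1
  rw [sum_tau_prod (fun k σ' => bcastP b h ω s' σ' *
    (if k = j then flipI b h w σ' else zeroI b h σ'))]
  rw [← Finset.mul_prod_erase Finset.univ
    (fun k => ∑ σ' : Vtx b h → Bool, bcastP b h ω s' σ' *
      (if k = j then flipI b h w σ' else zeroI b h σ')) (Finset.mem_univ j)]
  congr 1
  · simp
  · rw [Finset.prod_congr rfl (fun k hk => by
      simp only [if_neg (Finset.mem_erase.mp hk).1]
      exact (P0_eq ω s').symm)]
    rw [Finset.prod_const, Finset.card_erase_of_mem (Finset.mem_univ j),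
      Finset.card_univ, Fintype.card_fin]

lemma leaf_exists (v : Vtx b (h+1)) (hv : (v.1 : ℕ) = h+1) :
    ∃ (j : Fin b) (wf : Vtx b h), v = emb b h j wf ∧ (wf.1 : ℕ) = h := by
  rcases (eV b h).surjective v with ⟨x, rfl⟩
  rcases x with _ | ⟨j, w⟩
  · exact absurd hv (by show ¬ ((0:ℕ) = h + 1); omega)
  · exact ⟨j, w, rfl, by simpa [eV] using hv⟩

end Aux18
namespace Aux18

variable {b h : ℕ}

lemma cardVtx_eq (hb : 2 ≤ b) : ((Fintype.card (Vtx b h) : ℝ)) = Nvert b h := by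
  have h1 : Fintype.card (Vtx b h)
      = Fintype.card (Σ k : Fin (h+1), (Fin (k : ℕ) → Fin b)) :=
    Fintype.card_congr (Equiv.cast (by unfold Vtx; rfl))
  have h2 : Fintype.card (Σ k : Fin (h+1), (Fin (k : ℕ) → Fin b))
      = ∑ k : Fin (h+1), b ^ (k : ℕ) := by
    rw [Fintype.card_sigma]
    refine Fintype.sum_congr _ _ fun k => ?_
    rw [Fintype.card_fun, Fintype.card_fin, Fintype.card_fin]
  have hbR : (1:ℝ) < (b:ℝ) := by
    have : (2:ℝ) ≤ (b:ℝ) := by exact_mod_cast hb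
    linarith
  rw [h1, h2]
  push_cast
  rw [Fin.sum_univ_eq_sum_range (fun k => ((b:ℝ)) ^ k) (h+1)]
  rw [geom_sum_eq (by linarith) (h+1)]
  unfold Nvert
  rfl

lemma Nvert_pos (hb : 2 ≤ b) : 0 < Nvert b h := by
  have hbR : (2:ℝ) ≤ (b:ℝ) := by exact_mod_cast hb
  unfold Nvert
  apply div_pos
  · have h2 : (2:ℝ) ≤ (b:ℝ) ^ (h+1) := by
      calc (2:ℝ) ≤ (b:ℝ) := hbR
        _ = (b:ℝ) ^ 1 := (pow_one _).symm
        _ ≤ (b:ℝ) ^ (h+1) := pow_le_pow_right₀ (by linarith) (by omega)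
    linarith
  · linarith

lemma SbarA_le_piv {ω : ℝ} (hb : 2 ≤ b) (hω : 0 ≤ ω) (X : ℝ) (hX0 : 0 ≤ X)
    (hX : ∀ v : Vtx b h, (v.1 : ℕ) = h → Piv b h ω false v ≤ X) :
    SbarA b h ω ≤ X := by
  have hN : 0 < Nvert b h := Nvert_pos hb
  have hNne : Nvert b h ≠ 0 := ne_of_gt hN
  set ind : Vtx b h → (Vtx b h → Bool) → ℝ := fun v σ =>
    if ((v.1 : ℕ) = h ∧ Rfun (Function.update σ v (!σ v)) (treeRoot b h)
        ≠ Rfun σ (treeRoot b h)) then 1 else 0 with hind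
  have hcard : ∀ σ : Vtx b h → Bool,
      ((Finset.univ.filter (fun v : Vtx b h => (v.1 : ℕ) = h ∧
          Rfun (Function.update σ v (!σ v)) (treeRoot b h) ≠
            Rfun σ (treeRoot b h))).card : ℝ) = ∑ v : Vtx b h, ind v σ := by
    intro σ
    rw [Finset.card_filter]
    push_cast
    rfl
  have hind0 : ∀ (v : Vtx b h) (σ : Vtx b h → Bool), 0 ≤ ind v σ := by
    intro v σ
    simp only [hind]
    split <;> norm_num
  have step1 : SbarA b h ω ≤
      ∑ σ : Vtx b h → Bool, (1 / Nvert b h) * ∑ v : Vtx b h, bcast b h ω σ * ind v σ := by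
    unfold SbarA
    refine Finset.sum_le_sum fun σ _ => ?_
    have hb0 : 0 ≤ bcast b h ω σ := by rw [bcast_eq]; exact bcastP_nonneg hω false σ
    rw [hcard σ, ← Finset.mul_sum]
    have hS : 0 ≤ ∑ v : Vtx b h, ind v σ := Finset.sum_nonneg fun v _ => hind0 v σ
    by_cases hr : Rfun σ (treeRoot b h) = true
    · rw [if_pos hr, mul_one]
      exact le_of_eq (by ring)
    · rw [if_neg hr, mul_zero]
      have : (0:ℝ) ≤ 1 / Nvert b h := by positivity
      exact mul_nonneg this (mul_nonneg hb0 hS)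
  refine le_trans step1 ?_
  rw [← Finset.mul_sum, Finset.sum_comm]
  have inner_le : ∀ v : Vtx b h,
      (∑ σ : Vtx b h → Bool, bcast b h ω σ * ind v σ) ≤ X := by
    intro v
    by_cases hv : (v.1 : ℕ) = h
    · have : (∑ σ : Vtx b h → Bool, bcast b h ω σ * ind v σ) = Piv b h ω false v := by
        unfold Piv
        refine Fintype.sum_congr _ _ fun σ => ?_
        rw [bcast_eq]
        congr 1
        simp only [hind]
        unfold flipI
        by_cases hf : Rfun (Function.update σ v (!σ v)) (treeRoot b h)
            ≠ Rfun σ (treeRoot b h)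
        · rw [if_pos ⟨hv, hf⟩, if_pos hf]
        · rw [if_neg (fun hc => hf hc.2), if_neg hf]
      rw [this]
      exact hX v hv
    · have : (∑ σ : Vtx b h → Bool, bcast b h ω σ * ind v σ) = 0 := by
        refine Finset.sum_eq_zero fun σ _ => ?_
        simp only [hind]
        rw [if_neg (fun hc => hv hc.1), mul_zero]
      rw [this]; exact hX0
  calc (1 / Nvert b h) * ∑ v : Vtx b h, ∑ σ : Vtx b h → Bool, bcast b h ω σ * ind v σ
      ≤ (1 / Nvert b h) * ∑ _v : Vtx b h, X := by
        refine mul_le_mul_of_nonneg_left (Finset.sum_le_sum fun v _ => inner_le v) ?_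
        positivity
    _ = (1 / Nvert b h) * ((Fintype.card (Vtx b h) : ℝ) * X) := by
        rw [Finset.sum_const, Finset.card_univ, nsmul_eq_mul]
    _ = X := by
        rw [cardVtx_eq hb]
        field_simp
  done

end Aux18
namespace Aux18

open Real

-- numeric core packaged as hypotheses-to-facts lemmas
lemma numeric_facts (δ : ℝ) (hδ : 0 < δ) (b : ℕ) (hb : 2 ≤ b) (ω lam : ℝ)
    (hω : ω = (1 + δ) * Real.log b / b) (hlam : lam = ω * (1 + ω) ^ b)
    (hcond : Real.exp (2 * 1.01 * (ω * b) ^ 2 / lam) ≤ 1.01) :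
    0 < ω ∧ 0 < lam ∧ 8 ≤ ω * b ∧ 202 * (ω * b)^2 ≤ lam ∧
      1.01 * (ω*b)^2 / lam ≤ Real.log 1.01 := by
  have hb0 : (0:ℕ) < b := by omega
  have hbR : (2:ℝ) ≤ (b:ℝ) := by exact_mod_cast hb
  have hlogb : 0 < Real.log b := Real.log_pos (by linarith)
  have hω0 : 0 < ω := by
    rw [hω]; positivity
  have hlam0 : 0 < lam := by
    rw [hlam]; positivity
  have hxlog : Real.log 2 ≤ ω * b := by
    have h1 : Real.log 2 ≤ Real.log b := Real.log_le_log (by norm_num) (by linarith)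
    have h2 : ω * b = (1 + δ) * Real.log b := by
      rw [hω]; field_simp
    rw [h2]
    nlinarith
  have hx0 : 0 < ω * b := by positivity
  have hcb : 2 * 1.01 * (ω * b) ^ 2 / lam ≤ Real.log 1.01 := by
    have := Real.log_le_log (Real.exp_pos _) hcond
    rwa [Real.log_exp] at this
  have hlog101 : Real.log 1.01 ≤ 0.01 := by
    have := Real.log_le_sub_one_of_pos (show (0:ℝ) < 1.01 by norm_num)
    linarith
  have hlamge : 202 * (ω * b)^2 ≤ lam := by
    have h1 : 2 * 1.01 * (ω * b)^2 / lam ≤ 0.01 := le_trans hcb hlog101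
    rw [div_le_iff₀ hlam0] at h1
    nlinarith
  have hlamle : lam ≤ ω * Real.exp (ω * b) := by
    rw [hlam]
    have h1 : (1 + ω)^b ≤ Real.exp ω ^ b :=
      pow_le_pow_left₀ (by linarith) (by linarith [Real.add_one_le_exp ω]) b
    have h2 : Real.exp ω ^ b = Real.exp (ω * b) := by
      rw [← Real.exp_nat_mul]; ring_nf
    nlinarith [h1, h2]
  have hexp_ge : 404 * (ω * b) ≤ Real.exp (ω * b) := by
    have h1 : 202 * (ω*b)^2 ≤ ω * Real.exp (ω * b) := le_trans hlamge hlamle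
    have h2 : 404 * ω * (ω * b) ≤ 202 * (ω*b)^2 := by nlinarith
    have h3 : 404 * ω * (ω*b) ≤ ω * Real.exp (ω*b) := le_trans h2 h1
    have := (mul_le_mul_iff_right₀ hω0).mp (by linarith : ω * (404 * (ω*b)) ≤ ω * Real.exp (ω*b))
    linarith
  have hx8 : 8 ≤ ω * b := by
    by_contra hlt
    push_neg at hlt
    set x := ω * b with hxdef
    have hlog2lt : Real.log 2 ≤ 1 := by
      have := Real.log_le_sub_one_of_pos (show (0:ℝ) < 2 by norm_num)
      linarith
    set t := (x - Real.log 2) / (8 - Real.log 2) with htdef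
    have hden : 0 < 8 - Real.log 2 := by linarith
    have ht0 : 0 ≤ t := div_nonneg (by linarith) hden.le
    have ht1 : t < 1 := by
      rw [htdef, div_lt_one hden]; linarith
    have hxeq : x = (1 - t) * Real.log 2 + t * 8 := by
      rw [htdef]; field_simp; ring
    have hconv := convexOn_exp.2 (Set.mem_univ (Real.log 2)) (Set.mem_univ (8:ℝ))
      (by linarith : (0:ℝ) ≤ 1 - t) ht0 (by ring)
    simp only [smul_eq_mul] at hconv
    rw [← hxeq] at hconv
    have hexplog2 : Real.exp (Real.log 2) = 2 := Real.exp_log (by norm_num)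
    have hexp8 : Real.exp 8 < 3232 := by
      have h8 : Real.exp 8 = Real.exp 1 ^ 8 := by
        rw [← Real.exp_nat_mul]; norm_num
      have h9 : Real.exp 1 ^ 8 ≤ 2.7182818286 ^ 8 :=
        pow_le_pow_left₀ (Real.exp_pos 1).le Real.exp_one_lt_d9.le 8
      have h10 : (2.7182818286:ℝ) ^ 8 < 3232 := by norm_num
      linarith [h8 ▸ h9]
    have hlog2gt : (0.6931471803:ℝ) < Real.log 2 := Real.log_two_gt_d9
    have hlt404 : Real.exp x < 404 * x := by
      calc Real.exp x ≤ (1 - t) * Real.exp (Real.log 2) + t * Real.exp 8 := hconv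
        _ = (1 - t) * 2 + t * Real.exp 8 := by rw [hexplog2]
        _ < (1 - t) * (404 * Real.log 2) + t * (404 * 8) := by nlinarith
        _ = 404 * x := by rw [hxeq]; ring
    linarith [hexp_ge]
  refine ⟨hω0, hlam0, hx8, hlamge, ?_⟩
  have hq : 2 * 1.01 * (ω * b) ^ 2 / lam = 2 * (1.01 * (ω * b)^2 / lam) := by ring
  have hq0 : 0 ≤ 1.01 * (ω * b)^2 / lam := by positivity
  linarith [hcb]

end Aux18
set_option maxHeartbeats 2000000 in
theorem stmt18 (δ : ℝ) (hδ : 0 < δ) (b : ℕ) (hb : 2 ≤ b) (ω lam : ℝ)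
    (hω : ω = (1 + δ) * Real.log b / b) (hlam : lam = ω * (1 + ω) ^ b)
    (hcond : Real.exp (2 * 1.01 * (ω * b) ^ 2 / lam) ≤ 1.01) :
    ∃ C : ℝ, 0 < C ∧ ∀ h : ℕ, 1 ≤ h →
      SbarA b h ω ≤ C * (1.01 * ω / Real.sqrt lam) ^ h ∧
      SbarA b h ω ≤
        C * Nvert b h ^
          (-(1 + Real.log (lam / (1.01 * ω * (b : ℝ)) ^ 2) / (2 * Real.log b))) := by
  obtain ⟨hω0, hlam0, hx8, hlamge, hcbhalf⟩ :=
    Aux18.numeric_facts δ hδ b hb ω lam hω hlam hcond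
  have hbR : (2:ℝ) ≤ (b:ℝ) := by exact_mod_cast hb
  have hb1 : (1:ℕ) ≤ b := by omega
  have hbRpos : (0:ℝ) < (b:ℝ) := by linarith
  have hω1 : (0:ℝ) < 1 + ω := by linarith
  have hε0 : (0:ℝ) < ω / (1 + ω) := by positivity
  have hε1 : ω / (1 + ω) < 1 := by rw [div_lt_one hω1]; linarith
  have h1me : 1 - ω / (1 + ω) = 1 / (1 + ω) := by field_simp; ring
  -- the constant c
  have hc0 : (0:ℝ) ≤ 1.01 * ω ^ 2 * b / lam := by positivity
  have hcb2 : (1.01 * ω ^ 2 * b / lam) * b ≤ Real.log 1.01 := by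
    have heq : (1.01 * ω ^ 2 * b / lam) * b = 1.01 * (ω * b) ^ 2 / lam := by ring
    rw [heq]; exact hcbhalf
  have hlog101 : Real.log 1.01 ≤ 0.01 := by
    have := Real.log_le_sub_one_of_pos (show (0:ℝ) < 1.01 by norm_num)
    linarith
  have hecb : Real.exp ((1.01 * ω ^ 2 * b / lam) * b) ≤ 1.01 := by
    calc Real.exp ((1.01 * ω ^ 2 * b / lam) * b) ≤ Real.exp (Real.log 1.01) :=
          Real.exp_le_exp.mpr hcb2
      _ = 1.01 := Real.exp_log (by norm_num)
  -- c ≤ log (1+ω)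
  have hx0 : (0:ℝ) < ω * b := by positivity
  have h200x : 1 + ω ≤ 200 * (ω * b) := by
    by_cases hω2 : ω ≤ 1599
    · linarith [hx8]
    · push_neg at hω2
      have key := mul_le_mul_of_nonneg_left hbR (show (0:ℝ) ≤ 200 * ω by positivity)
      have heq : 200 * ω * (b:ℝ) = 200 * (ω * b) := by ring
      linarith [key, heq]
  have hc_eps : 1.01 * ω ^ 2 * b / lam ≤ ω / (1 + ω) := by
    have h1 : 1.01 * ω ^ 2 * b / lam ≤ 1.01 * ω / (202 * (ω * b)) := by
      rw [div_le_div_iff₀ hlam0 (by positivity)]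
      have key := mul_le_mul_of_nonneg_left hlamge (show (0:ℝ) ≤ 1.01 * ω by positivity)
      have heq : 1.01 * ω ^ 2 * b * (202 * (ω * b)) = 1.01 * ω * (202 * (ω * b) ^ 2) := by ring
      rw [heq]
      exact key
    have h2 : 1.01 * ω / (202 * (ω * b)) ≤ ω / (1 + ω) := by
      rw [div_le_div_iff₀ (by positivity) hω1]
      have key := mul_le_mul_of_nonneg_left h200x (show (0:ℝ) ≤ 1.01 * ω by positivity)
      have heq : 1.01 * ω * (200 * (ω * b)) = ω * (202 * (ω * b)) := by ring
      linarith [key, heq]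
    linarith
  have hlog1ω : ω / (1 + ω) ≤ Real.log (1 + ω) := by
    have h1 := Real.log_le_sub_one_of_pos (show (0:ℝ) < (1 + ω)⁻¹ by positivity)
    rw [Real.log_inv] at h1
    have h2 : (1:ℝ) - (1 + ω)⁻¹ = ω / (1 + ω) := by field_simp; ring
    linarith
  have hexpc_le : Real.exp (1.01 * ω ^ 2 * b / lam) ≤ 1 + ω := by
    calc Real.exp (1.01 * ω ^ 2 * b / lam) ≤ Real.exp (Real.log (1 + ω)) :=
          Real.exp_le_exp.mpr (le_trans hc_eps hlog1ω)
      _ = 1 + ω := Real.exp_log hω1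
  -- gB
  set c : ℝ := 1.01 * ω ^ 2 * b / lam with hcdef
  set gB : ℝ := Real.exp c / (1 + ω) with hgBdef
  have hexpc1 : (1:ℝ) ≤ Real.exp c := by
    have := Real.add_one_le_exp c; linarith
  have hgB0 : (0:ℝ) < gB := by positivity
  have hgB1 : gB ≤ 1 := by rw [hgBdef, div_le_one hω1]; exact hexpc_le
  have h1ω_pow : (1 + ω) ^ b = lam / ω := by
    rw [hlam]; field_simp
  have hexpcb : Real.exp c ^ b = Real.exp (c * b) := by
    rw [← Real.exp_nat_mul]; ring_nf
  have hgBb : gB ^ b ≤ 1.01 * ω / lam := by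
    rw [hgBdef, div_pow, h1ω_pow, hexpcb]
    have heq : Real.exp (c * b) / (lam / ω) = Real.exp (c * b) * ω / lam := by
      field_simp
    rw [heq]
    gcongr
  -- G
  set G : ℝ := gB ^ (b - 1) with hGdef
  have hG0 : (0:ℝ) < G := pow_pos hgB0 _
  have hgBlow : 1 / (1 + ω) ≤ gB := by
    rw [hgBdef]; gcongr
  have hGmul : G * gB = gB ^ b := by
    rw [hGdef, ← pow_succ]
    congr 1
    omega
  have hGle : G ≤ 1.01 * (ω * (1 + ω)) / lam := by
    have h1 : G = gB ^ b / gB := by rw [← hGmul]; field_simp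
    rw [h1]
    calc gB ^ b / gB ≤ (1.01 * ω / lam) / (1 / (1 + ω)) := by
          apply div_le_div₀ (by positivity) hgBb (by positivity) hgBlow
      _ = 1.01 * (ω * (1 + ω)) / lam := by field_simp
  -- r
  set r : ℝ := 1.01 * ω / Real.sqrt lam with hrdef
  have hsl0 : (0:ℝ) < Real.sqrt lam := Real.sqrt_pos.mpr hlam0
  have hr0 : (0:ℝ) < r := by positivity
  have hsqsq : Real.sqrt lam * Real.sqrt lam = lam := Real.mul_self_sqrt hlam0.le
  have hr2 : r ^ 2 = 1.01 ^ 2 * ω ^ 2 / lam := by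
    rw [hrdef, div_pow]
    congr 1
    · ring
    · rw [sq]; exact hsqsq
  have hsqrt113 : (113:ℝ) ≤ Real.sqrt lam := by
    have hlam113 : (113:ℝ) ^ 2 ≤ lam := by
      have hsq : (8:ℝ) ^ 2 ≤ (ω * b) ^ 2 := pow_le_pow_left₀ (by norm_num) hx8 2
      calc (113:ℝ) ^ 2 ≤ 202 * 8 ^ 2 := by norm_num
        _ ≤ 202 * (ω * b) ^ 2 := by linarith
        _ ≤ lam := hlamge
    have := Real.sqrt_le_sqrt hlam113
    rwa [Real.sqrt_sq (by norm_num : (0:ℝ) ≤ (113:ℝ))] at this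
  have hkey1 : (1 - ω / (1 + ω)) * G ≤ r / 113 := by
    have h2 : (1 - ω / (1 + ω)) * G ≤ (1 / (1 + ω)) * (1.01 * (ω * (1 + ω)) / lam) := by
      rw [h1me]; gcongr
    have h3 : (1 / (1 + ω)) * (1.01 * (ω * (1 + ω)) / lam) = 1.01 * ω / lam := by
      field_simp
    have h4 : 1.01 * ω / lam = r / Real.sqrt lam := by
      rw [hrdef, div_div]
      congr 1
      exact hsqsq.symm
    have h5 : r / Real.sqrt lam ≤ r / 113 := by gcongr
    linarith
  have hkey2 : (ω / (1 + ω)) * G ≤ r ^ 2 / 1.01 := by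
    have h1 : (ω / (1 + ω)) * G ≤ (ω / (1 + ω)) * (1.01 * (ω * (1 + ω)) / lam) := by
      gcongr
    have h2 : (ω / (1 + ω)) * (1.01 * (ω * (1 + ω)) / lam) = 1.01 * ω ^ 2 / lam := by
      field_simp
    have h3 : r ^ 2 / 1.01 = 1.01 * ω ^ 2 / lam := by rw [hr2]; ring
    linarith
  have hstep : (1 - ω / (1 + ω)) * G + (ω / (1 + ω)) * G / r ≤ r := by
    have h1 : (ω / (1 + ω)) * G / r ≤ r / 1.01 := by
      rw [div_le_div_iff₀ hr0 (by norm_num)]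
      have key := mul_le_mul_of_nonneg_right hkey2 (show (0:ℝ) ≤ 1.01 by norm_num)
      have heq : r ^ 2 / 1.01 * 1.01 = r * r := by ring
      linarith [key, heq]
    calc (1 - ω / (1 + ω)) * G + (ω / (1 + ω)) * G / r ≤ r / 113 + r / 1.01 :=
          add_le_add hkey1 h1
      _ = (11401/11413) * r := by ring
      _ ≤ r := by linarith [hr0]
  -- α, β
  set α : ℝ := max 1 (r / G) with hαdef
  have hα1 : (1:ℝ) ≤ α := le_max_left _ _
  have hα0 : (0:ℝ) < α := by linarith
  set β : ℝ := G * α / r with hβdef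
  have hβr : β * r = G * α := by rw [hβdef]; field_simp
  have hβ1 : (1:ℝ) ≤ β := by
    rw [hβdef]
    by_cases hc1 : r / G ≤ 1
    · rw [hαdef, max_eq_left hc1, mul_one, le_div_iff₀ hr0, one_mul]
      rw [div_le_one hG0] at hc1
      exact hc1
    · push_neg at hc1
      rw [hαdef, max_eq_right hc1.le]
      have heq : G * (r / G) / r = 1 := by field_simp
      rw [heq]
  have hβ0 : (0:ℝ) < β := by linarith
  have hstepX : (ω / (1 + ω)) * β + (1 - ω / (1 + ω)) * (α * G) ≤ r * α := by
    have h1 : (ω / (1 + ω)) * β = ((ω / (1 + ω)) * G / r) * α := by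
      rw [hβdef]; ring
    have h2 := mul_le_mul_of_nonneg_right hstep hα0.le
    have h3 : ((1 - ω / (1 + ω)) * G + (ω / (1 + ω)) * G / r) * α
        = ((ω / (1 + ω)) * G / r) * α + (1 - ω / (1 + ω)) * (α * G) := by ring
    rw [h1]
    linarith [h2, h3]
  -- fac values
  have hfac_ft : Aux18.fac ω false true = ω / (1 + ω) := by simp [Aux18.fac]
  have hfac_ff : Aux18.fac ω false false = 1 - ω / (1 + ω) := by simp [Aux18.fac]
  have hfac_tt : Aux18.fac ω true true = 0 := by simp [Aux18.fac]
  have hfac_tf : Aux18.fac ω true false = 1 := by simp [Aux18.fac]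
  -- invariant for P0
  have gq_bound : ∀ h : ℕ, Aux18.P0 b h ω false ≤ gB ∧
      1 - Aux18.P0 b h ω true ≤ 1.01 * ω / lam := by
    intro h
    induction h with
    | zero =>
      constructor
      · rw [Aux18.P0_zero, hfac_ff, h1me, hgBdef]
        gcongr
      · rw [Aux18.P0_zero, hfac_tf]
        have : (0:ℝ) ≤ 1.01 * ω / lam := by positivity
        linarith
    | succ h ih =>
      obtain ⟨ihg, ihq⟩ := ih
      have hg0 : 0 ≤ Aux18.P0 b h ω false := Aux18.P0_nonneg hω0.le false
      have hq0 : 0 ≤ Aux18.P0 b h ω true := Aux18.P0_nonneg hω0.le true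
      have hq1 : Aux18.P0 b h ω true ≤ 1 := Aux18.P0_le_one hω0.le true
      have hgb_le : Aux18.P0 b h ω false ^ b ≤ gB ^ b := pow_le_pow_left₀ hg0 ihg b
      constructor
      · rw [Aux18.P0_succ, Fintype.sum_bool, hfac_ft, hfac_ff]
        have hqb : 1 - (b:ℝ) * (1 - Aux18.P0 b h ω true) ≤ Aux18.P0 b h ω true ^ b := by
          have hber := one_add_mul_le_pow
            (show (-2:ℝ) ≤ Aux18.P0 b h ω true - 1 by linarith) b
          have heq2 : (1 + (Aux18.P0 b h ω true - 1)) = Aux18.P0 b h ω true := by ring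
          rw [heq2] at hber
          linarith
        have hgb0 : (0:ℝ) ≤ Aux18.P0 b h ω false ^ b := pow_nonneg hg0 b
        have t1 : ω/(1+ω) * (1 - Aux18.P0 b h ω true ^ b)
            ≤ ω/(1+ω) * ((b:ℝ) * (1 - Aux18.P0 b h ω true)) :=
          mul_le_mul_of_nonneg_left (by linarith [hqb]) hε0.le
        have t2 : ω/(1+ω) * ((b:ℝ) * (1 - Aux18.P0 b h ω true))
            ≤ ω/(1+ω) * ((b:ℝ) * (1.01 * ω / lam)) := by
          apply mul_le_mul_of_nonneg_left _ hε0.le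
          apply mul_le_mul_of_nonneg_left ihq (by positivity)
        have t3 : (1 - ω/(1+ω)) * (1 - Aux18.P0 b h ω false ^ b) ≤ (1 - ω/(1+ω)) * 1 :=
          mul_le_mul_of_nonneg_left (by linarith [hgb0]) (by linarith [hε1])
        have hεc : ω/(1+ω) * ((b:ℝ) * (1.01 * ω / lam)) = (1 - ω/(1+ω)) * c := by
          rw [h1me, hcdef]
          field_simp
        have h1c : 1 + c ≤ Real.exp c := by linarith [Real.add_one_le_exp c]
        have hfinal : (1 - ω/(1+ω)) * (1 + c) ≤ gB := by
          calc (1 - ω/(1+ω)) * (1 + c) = (1+c)/(1+ω) := by rw [h1me]; ring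
            _ ≤ Real.exp c / (1+ω) := by gcongr
            _ = gB := by rw [hgBdef]
        linarith [t1, t2, t3, hεc, hfinal]
      · rw [Aux18.P0_succ, Fintype.sum_bool, hfac_tt, hfac_tf]
        have : Aux18.P0 b h ω false ^ b ≤ 1.01 * ω / lam := le_trans hgb_le hgBb
        have hqb2 : (0:ℝ) ≤ 1 - Aux18.P0 b h ω true ^ b := by
          have := pow_le_one₀ (n := b) hq0 hq1
          linarith
        linarith
  -- induction bound on Piv
  have piv_bound : ∀ h : ℕ, ∀ v : Vtx b h, (v.1 : ℕ) = h →
      Aux18.Piv b h ω false v ≤ α * r ^ h ∧ Aux18.Piv b h ω true v ≤ β * r ^ h := by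
    intro h
    induction h with
    | zero =>
      intro v hv
      rw [Aux18.eq_root_of_depth_zero hv]
      constructor
      · rw [Aux18.Piv_zero, pow_zero, mul_one]; exact hα1
      · rw [Aux18.Piv_zero, pow_zero, mul_one]; exact hβ1
    | succ h ih =>
      intro v hv
      obtain ⟨j, w, rfl, hw⟩ := Aux18.leaf_exists v hv
      obtain ⟨ihf, iht⟩ := ih w hw
      have hg0 : 0 ≤ Aux18.P0 b h ω false := Aux18.P0_nonneg hω0.le false
      have hq0 : 0 ≤ Aux18.P0 b h ω true := Aux18.P0_nonneg hω0.le true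
      have hq1 : Aux18.P0 b h ω true ≤ 1 := Aux18.P0_le_one hω0.le true
      have hGb : Aux18.P0 b h ω false ^ (b-1) ≤ G := by
        rw [hGdef]
        exact pow_le_pow_left₀ hg0 (gq_bound h).1 (b-1)
      have hqb1 : Aux18.P0 b h ω true ^ (b-1) ≤ 1 := pow_le_one₀ (n := b-1) hq0 hq1
      have hpf0 : 0 ≤ Aux18.Piv b h ω false w := Aux18.Piv_nonneg hω0.le false w
      have hpt0 : 0 ≤ Aux18.Piv b h ω true w := Aux18.Piv_nonneg hω0.le true w
      have hrh0 : (0:ℝ) ≤ r ^ h := pow_nonneg hr0.le h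
      constructor
      · rw [Aux18.Piv_succ, Fintype.sum_bool, hfac_ft, hfac_ff]
        have u1 : Aux18.Piv b h ω true w * Aux18.P0 b h ω true ^ (b-1) ≤ β * r ^ h * 1 :=
          mul_le_mul iht hqb1 (pow_nonneg hq0 _) (by positivity)
        have u2 : Aux18.Piv b h ω false w * Aux18.P0 b h ω false ^ (b-1) ≤ α * r ^ h * G :=
          mul_le_mul ihf hGb (pow_nonneg hg0 _) (by positivity)
        have u3 : ω/(1+ω) * (Aux18.Piv b h ω true w * Aux18.P0 b h ω true ^ (b-1))
              + (1 - ω/(1+ω)) * (Aux18.Piv b h ω false w * Aux18.P0 b h ω false ^ (b-1))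
            ≤ ω/(1+ω) * (β * r ^ h) + (1 - ω/(1+ω)) * (α * r ^ h * G) := by
          have := mul_le_mul_of_nonneg_left u1 hε0.le
          have := mul_le_mul_of_nonneg_left u2 (by linarith [hε1] : (0:ℝ) ≤ 1 - ω/(1+ω))
          linarith
        have u4 : ω/(1+ω) * (β * r ^ h) + (1 - ω/(1+ω)) * (α * r ^ h * G)
            = (ω/(1+ω) * β + (1 - ω/(1+ω)) * (α * G)) * r ^ h := by ring
        have u5 := mul_le_mul_of_nonneg_right hstepX hrh0
        have u6 : r * α * r ^ h = α * r ^ (h+1) := by ring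
        linarith [u3, u4, u5, u6]
      · rw [Aux18.Piv_succ, Fintype.sum_bool, hfac_tt, hfac_tf]
        have u2 : Aux18.Piv b h ω false w * Aux18.P0 b h ω false ^ (b-1) ≤ α * r ^ h * G :=
          mul_le_mul ihf hGb (pow_nonneg hg0 _) (by positivity)
        have u7 : α * r ^ h * G = β * r ^ (h+1) := by
          have : β * r ^ (h+1) = (β * r) * r ^ h := by ring
          rw [this, hβr]
          ring
        have u8 : 0 * (Aux18.Piv b h ω true w * Aux18.P0 b h ω true ^ (b-1))
            + 1 * (Aux18.Piv b h ω false w * Aux18.P0 b h ω false ^ (b-1))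
            = Aux18.Piv b h ω false w * Aux18.P0 b h ω false ^ (b-1) := by ring
        linarith [u2, u7, u8]
  -- conclusion
  have hSbar : ∀ h : ℕ, SbarA b h ω ≤ α * r ^ h := by
    intro h
    exact Aux18.SbarA_le_piv hb hω0.le (α * r ^ h) (by positivity)
      (fun v hv => (piv_bound h v hv).1)
  -- conclusion: relate r to b^{-d}
  set d : ℝ := 1 + Real.log (lam / (1.01 * ω * (b:ℝ)) ^ 2) / (2 * Real.log b) with hddef
  have hlogb : (0:ℝ) < Real.log b := Real.log_pos (by linarith)
  have hrlt1 : r < 1 := by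
    have h2ω : 2 * ω ≤ ω * b := by
      have := mul_le_mul_of_nonneg_left hbR hω0.le
      linarith
    have hsq : (2*ω)^2 ≤ (ω*(b:ℝ))^2 := pow_le_pow_left₀ (by positivity) h2ω 2
    have e1 : (2*ω)^2 = 4*ω^2 := by ring
    have e2 : (1.01*ω)^2 = 1.0201*ω^2 := by ring
    have hω2 : (0:ℝ) < ω^2 := by positivity
    have hlt : (1.01*ω)^2 < lam := by linarith [hsq, hlamge, e1, e2, hω2]
    rw [hrdef, div_lt_one hsl0]
    exact (Real.lt_sqrt (by positivity : (0:ℝ) ≤ 1.01 * ω)).mpr hlt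
  have hlogr_neg : Real.log r < 0 := Real.log_neg hr0 hrlt1
  have hlr : Real.log r = Real.log (1.01*ω) - Real.log lam / 2 := by
    rw [hrdef, Real.log_div (by positivity) (ne_of_gt hsl0), Real.log_sqrt hlam0.le]
  have hl2 : Real.log (lam/(1.01*ω*(b:ℝ))^2)
      = Real.log lam - 2*(Real.log (1.01*ω) + Real.log b) := by
    rw [Real.log_div hlam0.ne' (by positivity), Real.log_pow,
      Real.log_mul (by positivity) hbRpos.ne']
    push_cast
    ring
  have hdlogb : d * Real.log b = - Real.log r := by
    rw [hddef, hl2, hlr]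
    field_simp
    ring
  have hd0 : 0 < d := by
    have h1 : 0 < d * Real.log b := by rw [hdlogb]; linarith
    have h2 : d = (d * Real.log b)/Real.log b := by field_simp
    rw [h2]
    exact div_pos h1 hlogb
  have hrexp : r = Real.exp (-(d * Real.log b)) := by
    rw [hdlogb, neg_neg, Real.exp_log hr0]
  have hC1 : (1:ℝ) ≤ (2:ℝ) ^ d := by
    calc (1:ℝ) = (2:ℝ) ^ (0:ℝ) := (Real.rpow_zero 2).symm
      _ ≤ (2:ℝ) ^ d := Real.rpow_le_rpow_of_exponent_le (by norm_num) hd0.le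
  have hC0 : (0:ℝ) < α * (2:ℝ) ^ d := by positivity
  refine ⟨α * (2:ℝ) ^ d, hC0, fun h hh => ?_⟩
  have hS := hSbar h
  have hrh0 : (0:ℝ) ≤ r ^ h := pow_nonneg hr0.le h
  constructor
  · have := mul_le_mul_of_nonneg_right (le_mul_of_one_le_right hα0.le hC1) hrh0
    calc SbarA b h ω ≤ α * r ^ h := hS
      _ ≤ α * (2:ℝ) ^ d * r ^ h := this
      _ = α * (2:ℝ) ^ d * (1.01 * ω / Real.sqrt lam) ^ h := by rw [hrdef]
  · have hbh0 : (0:ℝ) < (b:ℝ) ^ h := by positivity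
    have hN0 : 0 < Nvert b h := Aux18.Nvert_pos hb
    have hNle : Nvert b h ≤ 2 * (b:ℝ) ^ h := by
      unfold Nvert
      rw [div_le_iff₀ (by linarith : (0:ℝ) < (b:ℝ) - 1)]
      have hbh1 : (1:ℝ) ≤ (b:ℝ) ^ h := one_le_pow₀ (by linarith)
      have hpow : (b:ℝ) ^ (h+1) = (b:ℝ) * (b:ℝ) ^ h := by ring
      have hnn : (0:ℝ) ≤ ((b:ℝ) - 2) * (b:ℝ) ^ h := mul_nonneg (by linarith) hbh0.le
      have e3 : ((b:ℝ) - 2) * (b:ℝ) ^ h = (b:ℝ) * (b:ℝ) ^ h - 2 * (b:ℝ) ^ h := by ring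
      have e4 : 2 * (b:ℝ) ^ h * ((b:ℝ) - 1) = 2 * ((b:ℝ) * (b:ℝ) ^ h) - 2 * (b:ℝ) ^ h := by
        ring
      linarith [hnn, e3, e4, hpow, hbh1]
    have hrh : r ^ h = ((b:ℝ) ^ h) ^ (-d) := by
      rw [Real.rpow_def_of_pos hbh0, Real.log_pow, hrexp, ← Real.exp_nat_mul]
      congr 1
      push_cast
      ring
    have hNd : ((2:ℝ) * (b:ℝ) ^ h) ^ (-d) ≤ Nvert b h ^ (-d) :=
      Real.rpow_le_rpow_of_nonpos hN0 hNle (by linarith)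
    have hsplit : ((2:ℝ) * (b:ℝ) ^ h) ^ (-d) = (2:ℝ) ^ (-d) * ((b:ℝ) ^ h) ^ (-d) :=
      Real.mul_rpow (by norm_num) hbh0.le
    have h2d : (2:ℝ) ^ d * (2:ℝ) ^ (-d) = 1 := by
      rw [← Real.rpow_add (by norm_num)]
      simp
    calc SbarA b h ω ≤ α * r ^ h := hS
      _ = α * ((2:ℝ)^d * (2:ℝ)^(-d)) * (((b:ℝ) ^ h) ^ (-d)) := by
          rw [h2d, hrh]; ring
      _ = α * (2:ℝ)^d * ((2:ℝ)^(-d) * (((b:ℝ) ^ h) ^ (-d))) := by ring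
      _ ≤ α * (2:ℝ)^d * (Nvert b h ^ (-d)) := by
          have hle2 := le_trans (le_of_eq hsplit.symm) hNd
          exact mul_le_mul_of_nonneg_left hle2 (by positivity)
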